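/- Let s ∈ {−1,0,1} be a random variable with P(s=1) = Π·p, P(s=−1) = Π·(1−p), P(s=0) = 1 − Π, where Π ∈ [0,1] and p = σ(Δ) with σ the logistic function and Δ ∈ [−D,D]. Let L(x) = log(1 + e^{−x}), and suppose |L'| ≤ c_σ and L'' ≥ c_{σ'} on [−D,D]. Then for any Δ̂ ∈ [−D,D]: E[L(sΔ̂) − L(sΔ)] ≥ Π·(c_{σ'}/2)·(Δ̂−Δ)², and Var[L(sΔ̂) − L(sΔ)] ≤ Π·c_σ²·(Δ̂−Δ)². Consequently 0 ≤ Var[L(sΔ̂) − L(sΔ)] ≤ (2c_σ²/c_{σ'})·E[L(sΔ̂) − L(sΔ)]. -/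

import Mathlib

/-- The logistic loss `L(x) = log(1 + e^{-x})`. -/
noncomputable def logisticLoss (x : ℝ) : ℝ := Real.log (1 + Real.exp (-x))

section AuxLogistic
open Real Set

lemma logisticLoss_hasDerivAt (x : ℝ) :
    HasDerivAt logisticLoss (-(1 + Real.exp x)⁻¹) x := by
  have h1 : HasDerivAt (fun y : ℝ => 1 + Real.exp (-y)) (-Real.exp (-x)) x := by
    simpa using (((Real.hasDerivAt_exp (-x)).comp x (hasDerivAt_neg x))).const_add 1
  have hpos : (0:ℝ) < 1 + Real.exp (-x) := by positivity
  have h2 := h1.log hpos.ne'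
  refine h2.congr_deriv ?_
  symm
  rw [Real.exp_neg]
  have h3 := (Real.exp_pos x).ne'
  field_simp
  ring

lemma one_add_exp_pos (x : ℝ) : (0:ℝ) < 1 + Real.exp x := by positivity

lemma deriv_logisticLoss : deriv logisticLoss = fun x => -(1 + Real.exp x)⁻¹ :=
  funext fun x => (logisticLoss_hasDerivAt x).deriv

lemma inv_hasDerivAt (x : ℝ) :
    HasDerivAt (fun y : ℝ => -(1 + Real.exp y)⁻¹)
      (Real.exp x / (1 + Real.exp x) ^ 2) x := by
  have h1 : HasDerivAt (fun y : ℝ => 1 + Real.exp y) (Real.exp x) x := by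
    simpa using (Real.hasDerivAt_exp x).const_add 1
  have h2 := (h1.inv (one_add_exp_pos x).ne').neg
  refine h2.congr_deriv ?_
  symm
  field_simp

lemma deriv2_logisticLoss (x : ℝ) :
    deriv (deriv logisticLoss) x = Real.exp x / (1 + Real.exp x) ^ 2 := by
  rw [deriv_logisticLoss]
  exact (inv_hasDerivAt x).deriv

-- sigmoid
noncomputable def sg (x : ℝ) : ℝ := Real.exp x / (1 + Real.exp x)

lemma sg_eq (x : ℝ) : sg x = 1 - (1 + Real.exp x)⁻¹ := by
  unfold sg
  have := (one_add_exp_pos x).ne'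
  field_simp
  ring

lemma sg_hasDerivAt (x : ℝ) :
    HasDerivAt sg (Real.exp x / (1 + Real.exp x) ^ 2) x := by
  have h : HasDerivAt (fun y : ℝ => 1 - (1 + Real.exp y)⁻¹)
      (Real.exp x / (1 + Real.exp x) ^ 2) x := by
    have := (inv_hasDerivAt x).const_add 1
    simp only [← sub_eq_add_neg] at this
    exact this
  have : sg = fun y : ℝ => 1 - (1 + Real.exp y)⁻¹ := funext sg_eq
  rw [this]; exact h

lemma sg_nonneg (x : ℝ) : 0 ≤ sg x := by
  unfold sg; positivity

lemma sg_le_one (x : ℝ) : sg x ≤ 1 := by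
  unfold sg
  rw [div_le_one (one_add_exp_pos x)]
  linarith

-- the function f(x) = sg Δ * L(x) + (1 - sg Δ) * L(-x) has derivative sg x - sg Δ
lemma f_hasDerivAt (Δ x : ℝ) :
    HasDerivAt (fun y : ℝ => sg Δ * logisticLoss y + (1 - sg Δ) * logisticLoss (-y))
      (sg x - sg Δ) x := by
  have h1 := (logisticLoss_hasDerivAt x).const_mul (sg Δ)
  have h2 : HasDerivAt (fun y : ℝ => logisticLoss (-y)) ((1 + Real.exp (-x))⁻¹) x := by
    have := (logisticLoss_hasDerivAt (-x)).comp x (hasDerivAt_neg x)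
    exact this.congr_deriv (by ring)
  have h3 := h2.const_mul (1 - sg Δ)
  have h4 := h1.add h3
  refine h4.congr_deriv ?_
  symm
  rw [sg_eq, sg_eq, Real.exp_neg]
  have hx := (Real.exp_pos x).ne'
  have hΔ := (one_add_exp_pos Δ).ne'
  have hx2 := (one_add_exp_pos x).ne'
  field_simp
  ring

lemma strong_lb (D cσ' Δ Δhat : ℝ)
    (hΔ : Δ ∈ Icc (-D) D) (hΔhat : Δhat ∈ Icc (-D) D)
    (hσ' : ∀ t ∈ Icc (-D) D, cσ' ≤ Real.exp t / (1 + Real.exp t) ^ 2) :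
    cσ' / 2 * (Δhat - Δ) ^ 2 ≤
      (sg Δ * logisticLoss Δhat + (1 - sg Δ) * logisticLoss (-Δhat)) -
        (sg Δ * logisticLoss Δ + (1 - sg Δ) * logisticLoss (-Δ)) := by
  set H : ℝ → ℝ := fun x => sg x - sg Δ - cσ' * (x - Δ) with hHdef
  have hH : ∀ x, HasDerivAt H (Real.exp x / (1 + Real.exp x) ^ 2 - cσ') x := by
    intro x
    have := (sg_hasDerivAt x).sub_const (sg Δ)
    have h2 := this.sub (((hasDerivAt_id x).sub_const Δ).const_mul cσ')
    exact h2.congr_deriv (by ring)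
  have hHmono : MonotoneOn H (Icc (-D) D) := by
    apply monotoneOn_of_deriv_nonneg (convex_Icc _ _)
      (fun x _ => (hH x).continuousAt.continuousWithinAt)
      (fun x _ => (hH x).differentiableAt.differentiableWithinAt)
    intro x hx
    rw [interior_Icc] at hx
    rw [(hH x).deriv]
    have := hσ' x (Ioo_subset_Icc_self hx)
    linarith
  have hHΔ : H Δ = 0 := by simp [hHdef]
  set G : ℝ → ℝ := fun x =>
    (sg Δ * logisticLoss x + (1 - sg Δ) * logisticLoss (-x)) - cσ' / 2 * (x - Δ) ^ 2
    with hGdef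
  have hG : ∀ x, HasDerivAt G (H x) x := by
    intro x
    have hq : HasDerivAt (fun y : ℝ => cσ' / 2 * (y - Δ) ^ 2) (cσ' * (x - Δ)) x := by
      have := (((hasDerivAt_id x).sub_const Δ).pow 2).const_mul (cσ' / 2)
      refine this.congr_deriv ?_
      simp
      ring
    have := (f_hasDerivAt Δ x).sub hq
    exact this
  have key : G Δ ≤ G Δhat := by
    rcases le_total Δ Δhat with hle | hle
    · have hmono : MonotoneOn G (Icc Δ D) := by
        apply monotoneOn_of_deriv_nonneg (convex_Icc _ _)
          (fun x _ => (hG x).continuousAt.continuousWithinAt)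
          (fun x _ => (hG x).differentiableAt.differentiableWithinAt)
        intro x hx
        rw [interior_Icc] at hx
        rw [(hG x).deriv]
        have hxI : x ∈ Icc (-D) D := ⟨by linarith [hΔ.1, hx.1], hx.2.le⟩
        have := hHmono hΔ hxI hx.1.le
        linarith [hHΔ]
      exact hmono (left_mem_Icc.2 hΔ.2) ⟨hle, hΔhat.2⟩ hle
    · have hanti : AntitoneOn G (Icc (-D) Δ) := by
        apply antitoneOn_of_deriv_nonpos (convex_Icc _ _)
          (fun x _ => (hG x).continuousAt.continuousWithinAt)
          (fun x _ => (hG x).differentiableAt.differentiableWithinAt)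
        intro x hx
        rw [interior_Icc] at hx
        rw [(hG x).deriv]
        have hxI : x ∈ Icc (-D) D := ⟨hx.1.le, by linarith [hΔ.2, hx.2]⟩
        have := hHmono hxI hΔ hx.2.le
        linarith [hHΔ]
      exact hanti ⟨hΔhat.1, hle⟩ (right_mem_Icc.2 hΔ.1) hle
  have : G Δ = sg Δ * logisticLoss Δ + (1 - sg Δ) * logisticLoss (-Δ) := by
    simp [hGdef]
  rw [this] at key
  simp only [hGdef] at key
  linarith

end AuxLogistic

set_option maxHeartbeats 1000000 in
/-- for the three-point random variable `s ∈ {-1,0,1}` with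
`P(s=1) = Pr p`, `P(s=-1) = Pr (1-p)`, `P(s=0) = 1-Pr`, `p = σ(Δ)`, the mean and variance of
`L(sΔ̂) − L(sΔ)` (which vanishes on `{s=0}`) satisfy the stated bounds, and hence
`0 ≤ Var ≤ (2 c_σ²/c_{σ'}) E`. -/
theorem logistic_loss_bias_variance
    (D cσ cσ' Pr Δ Δhat : ℝ)
    (hD : 0 < D)
    (hPr : Pr ∈ Set.Icc (0:ℝ) 1)
    (hΔ : Δ ∈ Set.Icc (-D) D) (hΔhat : Δhat ∈ Set.Icc (-D) D)
    (hcσ' : 0 < cσ')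
    (hL' : ∀ t ∈ Set.Icc (-D) D, |deriv logisticLoss t| ≤ cσ)
    (hL'' : ∀ t ∈ Set.Icc (-D) D, cσ' ≤ deriv (deriv logisticLoss) t) :
    Pr * (cσ' / 2) * (Δhat - Δ) ^ 2 ≤
        Pr * (Real.exp Δ / (1 + Real.exp Δ)) * (logisticLoss Δhat - logisticLoss Δ)
          + Pr * (1 - Real.exp Δ / (1 + Real.exp Δ)) *
              (logisticLoss (-Δhat) - logisticLoss (-Δ))
      ∧ (Pr * (Real.exp Δ / (1 + Real.exp Δ)) * (logisticLoss Δhat - logisticLoss Δ) ^ 2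
          + Pr * (1 - Real.exp Δ / (1 + Real.exp Δ)) *
              (logisticLoss (-Δhat) - logisticLoss (-Δ)) ^ 2
          - (Pr * (Real.exp Δ / (1 + Real.exp Δ)) * (logisticLoss Δhat - logisticLoss Δ)
              + Pr * (1 - Real.exp Δ / (1 + Real.exp Δ)) *
                  (logisticLoss (-Δhat) - logisticLoss (-Δ))) ^ 2)
          ≤ Pr * cσ ^ 2 * (Δhat - Δ) ^ 2
      ∧ 0 ≤ (Pr * (Real.exp Δ / (1 + Real.exp Δ)) * (logisticLoss Δhat - logisticLoss Δ) ^ 2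
          + Pr * (1 - Real.exp Δ / (1 + Real.exp Δ)) *
              (logisticLoss (-Δhat) - logisticLoss (-Δ)) ^ 2
          - (Pr * (Real.exp Δ / (1 + Real.exp Δ)) * (logisticLoss Δhat - logisticLoss Δ)
              + Pr * (1 - Real.exp Δ / (1 + Real.exp Δ)) *
                  (logisticLoss (-Δhat) - logisticLoss (-Δ))) ^ 2)
      ∧ (Pr * (Real.exp Δ / (1 + Real.exp Δ)) * (logisticLoss Δhat - logisticLoss Δ) ^ 2
          + Pr * (1 - Real.exp Δ / (1 + Real.exp Δ)) *
              (logisticLoss (-Δhat) - logisticLoss (-Δ)) ^ 2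
          - (Pr * (Real.exp Δ / (1 + Real.exp Δ)) * (logisticLoss Δhat - logisticLoss Δ)
              + Pr * (1 - Real.exp Δ / (1 + Real.exp Δ)) *
                  (logisticLoss (-Δhat) - logisticLoss (-Δ))) ^ 2)
          ≤ (2 * cσ ^ 2 / cσ') *
            (Pr * (Real.exp Δ / (1 + Real.exp Δ)) * (logisticLoss Δhat - logisticLoss Δ)
              + Pr * (1 - Real.exp Δ / (1 + Real.exp Δ)) *
                  (logisticLoss (-Δhat) - logisticLoss (-Δ))) := by
  obtain ⟨hPr0, hPr1⟩ := hPr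
  -- rewrite second derivative hypothesis
  have hσ' : ∀ t ∈ Set.Icc (-D) D, cσ' ≤ Real.exp t / (1 + Real.exp t) ^ 2 := by
    intro t ht
    have := hL'' t ht
    rwa [deriv2_logisticLoss] at this
  -- Lipschitz bounds
  have hdiff : ∀ x ∈ Set.Icc (-D) D, DifferentiableAt ℝ logisticLoss x :=
    fun x _ => (logisticLoss_hasDerivAt x).differentiableAt
  have hbound : ∀ x ∈ Set.Icc (-D) D, ‖deriv logisticLoss x‖ ≤ cσ := by
    intro x hx
    simpa [Real.norm_eq_abs] using hL' x hx
  have hnegΔ : -Δ ∈ Set.Icc (-D) D := ⟨by linarith [hΔ.2], by linarith [hΔ.1]⟩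
  have hnegΔhat : -Δhat ∈ Set.Icc (-D) D := ⟨by linarith [hΔhat.2], by linarith [hΔhat.1]⟩
  have hA : |logisticLoss Δhat - logisticLoss Δ| ≤ cσ * |Δhat - Δ| := by
    have := Convex.norm_image_sub_le_of_norm_deriv_le hdiff hbound (convex_Icc _ _) hΔ hΔhat
    simpa [Real.norm_eq_abs] using this
  have hB : |logisticLoss (-Δhat) - logisticLoss (-Δ)| ≤ cσ * |Δhat - Δ| := by
    have := Convex.norm_image_sub_le_of_norm_deriv_le hdiff hbound (convex_Icc _ _)
      hnegΔ hnegΔhat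
    have h2 : |-Δhat + Δ| = |Δhat - Δ| := by
      rw [← abs_neg]; ring_nf
    simpa [Real.norm_eq_abs, h2] using this
  have hcσ0 : 0 ≤ cσ := by
    have h0 : (0:ℝ) ∈ Set.Icc (-D) D := ⟨by linarith, by linarith⟩
    exact le_trans (abs_nonneg _) (hL' 0 h0)
  -- squared bounds
  set A := logisticLoss Δhat - logisticLoss Δ with hAdef
  set B := logisticLoss (-Δhat) - logisticLoss (-Δ) with hBdef
  set d := Δhat - Δ with hddef
  have hA2 : A ^ 2 ≤ cσ ^ 2 * d ^ 2 := by
    have := pow_le_pow_left₀ (abs_nonneg A) hA 2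
    calc A ^ 2 = |A| ^ 2 := (sq_abs A).symm
      _ ≤ (cσ * |d|) ^ 2 := this
      _ = cσ ^ 2 * d ^ 2 := by rw [mul_pow, sq_abs]
  have hB2 : B ^ 2 ≤ cσ ^ 2 * d ^ 2 := by
    have := pow_le_pow_left₀ (abs_nonneg B) hB 2
    calc B ^ 2 = |B| ^ 2 := (sq_abs B).symm
      _ ≤ (cσ * |d|) ^ 2 := this
      _ = cσ ^ 2 * d ^ 2 := by rw [mul_pow, sq_abs]
  -- mean lower bound
  have hE0 := strong_lb D cσ' Δ Δhat hΔ hΔhat hσ'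
  have hsgeq : Real.exp Δ / (1 + Real.exp Δ) = sg Δ := rfl
  rw [hsgeq]
  set p := sg Δ with hpdef
  have hp0 : 0 ≤ p := hpdef ▸ sg_nonneg Δ
  have hp1 : p ≤ 1 := hpdef ▸ sg_le_one Δ
  clear_value p
  have hE : cσ' / 2 * d ^ 2 ≤ p * A + (1 - p) * B := by
    have h : p * logisticLoss Δhat + (1 - p) * logisticLoss (-Δhat) -
        (p * logisticLoss Δ + (1 - p) * logisticLoss (-Δ)) = p * A + (1 - p) * B := by
      rw [hAdef, hBdef]; ring
    rw [← hddef, h] at hE0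
    exact hE0
  clear_value A B d
  have hw1 : 0 ≤ Pr * p := mul_nonneg hPr0 hp0
  have hw2 : 0 ≤ Pr * (1 - p) := mul_nonneg hPr0 (by linarith)
  have goal1 : Pr * (cσ' / 2) * d ^ 2 ≤ Pr * p * A + Pr * (1 - p) * B := by
    have h := mul_le_mul_of_nonneg_left hE hPr0
    linarith [h]
  have t1 := mul_le_mul_of_nonneg_left hA2 hw1
  have t2 := mul_le_mul_of_nonneg_left hB2 hw2
  have hsq := sq_nonneg (Pr * p * A + Pr * (1 - p) * B)
  have hvar : Pr * p * A ^ 2 + Pr * (1 - p) * B ^ 2 -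
      (Pr * p * A + Pr * (1 - p) * B) ^ 2 ≤ Pr * cσ ^ 2 * d ^ 2 := by
    linarith [t1, t2, hsq]
  refine ⟨goal1, hvar, ?_, ?_⟩
  · -- variance nonneg
    have hrem : 0 ≤ 1 - (Pr * p + Pr * (1 - p)) := by
      have hPeq : Pr * p + Pr * (1 - p) = Pr := by ring
      linarith
    have c1 : 0 ≤ Pr * p * (Pr * (1 - p)) * (A - B) ^ 2 :=
      mul_nonneg (mul_nonneg hw1 hw2) (sq_nonneg _)
    have c2 : 0 ≤ (1 - (Pr * p + Pr * (1 - p))) * (Pr * p * A ^ 2) :=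
      mul_nonneg hrem (mul_nonneg hw1 (sq_nonneg _))
    have c3 : 0 ≤ (1 - (Pr * p + Pr * (1 - p))) * (Pr * (1 - p) * B ^ 2) :=
      mul_nonneg hrem (mul_nonneg hw2 (sq_nonneg _))
    linarith [c1, c2, c3]
  · -- consequence
    have heq : Pr * cσ ^ 2 * d ^ 2 = (2 * cσ ^ 2 / cσ') * (Pr * (cσ' / 2) * d ^ 2) := by
      field_simp
    have hfac : 0 ≤ 2 * cσ ^ 2 / cσ' := by positivity
    calc Pr * p * A ^ 2 + Pr * (1 - p) * B ^ 2 -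
        (Pr * p * A + Pr * (1 - p) * B) ^ 2
        ≤ Pr * cσ ^ 2 * d ^ 2 := hvar
      _ = (2 * cσ ^ 2 / cσ') * (Pr * (cσ' / 2) * d ^ 2) := heq
      _ ≤ (2 * cσ ^ 2 / cσ') * (Pr * p * A + Pr * (1 - p) * B) :=
          mul_le_mul_of_nonneg_left goal1 hfac
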